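/- The left-shift operator S on ℓ¹(ℕ) satisfies condition (NSE); that is, there exist ε > 0 and a strictly increasing sequence (j_p)_{p∈ℕ} of natural numbers such that for every m ∈ ℕ there exists x ∈ ℓ¹(ℕ) with ‖x‖ ≤ 1 and ‖A_{j_p} x − A_{j_{p+1}} x‖ > ε for all p ≤ m, where A_n = (1/n) ∑_{k=0}^{n-1} S^k. (Hence S is not super-ergodic.) -/

import Mathlib

open Filter Topology

/-- The `n`-th Cesàro mean `A_n = (1/n) ∑_{k<n} T^k` of an operator `T`. -/
noncomputable def cesaroMean {X : Type*} [NormedAddCommGroup X] [NormedSpace ℝ X]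
    (T : X →L[ℝ] X) (n : ℕ) : X →L[ℝ] X :=
  (n : ℝ)⁻¹ • ∑ k ∈ Finset.range n, T ^ k

/-- The strong operator topology on `L(X)`: the topology of pointwise convergence,
induced from the product topology on `X → X`. -/
def sot (X : Type*) [NormedAddCommGroup X] [NormedSpace ℝ X] : TopologicalSpace (X →L[ℝ] X) :=
  TopologicalSpace.induced (fun T => (T : X → X)) Pi.topologicalSpace

/-- `T` is Cesàro-bounded if the norms of its Cesàro means are uniformly bounded. -/
def CesaroBounded {X : Type*} [NormedAddCommGroup X] [NormedSpace ℝ X]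
    (T : X →L[ℝ] X) : Prop :=
  ∃ M : ℝ, ∀ n : ℕ, ‖cesaroMean T n‖ ≤ M

/-- `T` is ergodic if for every `x` the sequence of Cesàro means at `x` converges in norm. -/
def IsErgodicOp {X : Type*} [NormedAddCommGroup X] [NormedSpace ℝ X]
    (T : X →L[ℝ] X) : Prop :=
  ∀ x : X, ∃ y : X, Tendsto (fun n => cesaroMean T n x) atTop (𝓝 y)

/-- `T` is uniformly ergodic if the sequence of Cesàro means converges in operator norm. -/
def IsUniformlyErgodicOp {X : Type*} [NormedAddCommGroup X] [NormedSpace ℝ X]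
    (T : X →L[ℝ] X) : Prop :=
  ∃ L : X →L[ℝ] X, Tendsto (fun n => cesaroMean T n) atTop (𝓝 L)

/-- Condition (NSE): there are `ε > 0` and a strictly increasing sequence `j` such that
for every `m` some `x` in the unit ball satisfies `‖A_{j_p} x - A_{j_{p+1}} x‖ > ε`
for all `p ≤ m`. -/
def NSE {X : Type*} [NormedAddCommGroup X] [NormedSpace ℝ X]
    (T : X →L[ℝ] X) : Prop :=
  ∃ ε > (0 : ℝ), ∃ j : ℕ → ℕ, StrictMono j ∧
    ∀ m : ℕ, ∃ x : X, ‖x‖ ≤ 1 ∧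
      ∀ p ≤ m, ε < ‖cesaroMean T (j p) x - cesaroMean T (j (p + 1)) x‖

/-- The tree `𝒜_e(T, ε)`: finite strictly increasing sequences `s` of naturals such that
`|s| ≤ 1` or some `x` in the unit ball satisfies `‖A_{s_p} x - A_{s_{p+1}} x‖ > ε`
for all consecutive pairs of entries of `s`. -/
def ergoTree {X : Type*} [NormedAddCommGroup X] [NormedSpace ℝ X]
    (T : X →L[ℝ] X) (ε : ℝ) : Set (List ℕ) :=
  {s | s.Chain' (· < ·) ∧ (s.length ≤ 1 ∨ ∃ x : X, ‖x‖ ≤ 1 ∧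
    ∀ p : ℕ, p + 1 < s.length →
      ε < ‖cesaroMean T (s.getD p 0) x - cesaroMean T (s.getD (p + 1) 0) x‖)}

/-- A tree on `ℕ` (a set of finite sequences) is well-founded if it has no infinite branch. -/
def TreeWF (𝒜 : Set (List ℕ)) : Prop :=
  ¬ ∃ J : ℕ → ℕ, ∀ m : ℕ, (List.range m).map J ∈ 𝒜

/-- The relation "is a proper extension of", restricted to the nodes of the tree `𝒜`. -/
def treeRel (𝒜 : Set (List ℕ)) : List ℕ → List ℕ → Prop :=
  fun t s => s ∈ 𝒜 ∧ t ∈ 𝒜 ∧ s <+: t ∧ s ≠ t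

open Classical in
/-- The height of a well-founded tree: the ordinal rank of the relation
"is a proper extension of" on its nodes, evaluated at the empty sequence
(and `0` by convention if that relation is not well-founded). -/
noncomputable def treeHeight (𝒜 : Set (List ℕ)) : Ordinal :=
  if h : WellFounded (treeRel 𝒜) then (h.apply []).rank else 0

/-- The left shift `S` on `ℓ¹(ℕ)` satisfies condition (NSE); hence it is not super-ergodic. -/
theorem stmt_15 (S : lp (fun _ : ℕ => ℝ) 1 →L[ℝ] lp (fun _ : ℕ => ℝ) 1)
    (hS : ∀ (x : lp (fun _ : ℕ => ℝ) 1) (k : ℕ), S x k = x (k + 1)) :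
    NSE S := by
  have hpow : ∀ (k : ℕ) (y : lp (fun _ : ℕ => ℝ) 1) (i : ℕ), (S ^ k) y i = y (i + k) := by
    intro k
    induction k with
    | zero => intro y i; simp
    | succ k ih =>
      intro y i
      rw [pow_succ, ContinuousLinearMap.mul_apply, ih, hS, add_assoc]
  have hA : ∀ (n : ℕ) (y : lp (fun _ : ℕ => ℝ) 1) (i : ℕ),
      (cesaroMean S n) y i = (n : ℝ)⁻¹ * ∑ k ∈ Finset.range n, y (i + k) := by
    intro n y i
    simp only [cesaroMean, ContinuousLinearMap.smul_apply, ContinuousLinearMap.sum_apply,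
      lp.coeFn_smul, Pi.smul_apply, smul_eq_mul]
    congr 1
    rw [lp.coeFn_sum, Finset.sum_apply]
    exact Finset.sum_congr rfl fun k _ => hpow k y i
  refine ⟨1/2, by norm_num, fun p => 4 ^ p, ?_, ?_⟩
  · exact fun a b h => Nat.pow_lt_pow_right (by norm_num) h
  intro m
  set N : ℕ := 4 ^ (m + 1) with hN
  set x : lp (fun _ : ℕ => ℝ) 1 := lp.single 1 N (1 : ℝ) with hx
  have hxnorm : ‖x‖ = 1 := by
    rw [hx]
    have := lp.norm_single (p := 1) (E := fun _ : ℕ => ℝ) (by norm_num) N (1:ℝ)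
    simpa using this
  refine ⟨x, le_of_eq hxnorm, ?_⟩
  intro p hp
  set n : ℕ := 4 ^ p with hn
  have hnpos : 0 < n := Nat.pow_pos (by norm_num)
  have hnN : 4 * n ≤ N := by
    rw [hN, hn, pow_succ]
    have : 4 ^ p ≤ 4 ^ m := Nat.pow_le_pow_right (by norm_num) hp
    omega
  -- coordinate values of x
  have hxcoord : ∀ i : ℕ, x i = if i = N then 1 else 0 := by
    intro i
    by_cases h : i = N
    · subst h; rw [hx]; simp [lp.single_apply_self]
    · rw [hx, lp.single_apply_ne _ _ _ h, if_neg h]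
  -- key sum: for N - q < i ≤ N, with q ≤ N, sum over range q of x (i+k) = 1
  have hsum : ∀ q i : ℕ, q ≤ N → N - q < i → i ≤ N →
      ∑ k ∈ Finset.range q, x (i + k) = 1 := by
    intro q i hq h1 h2
    have : ∀ k ∈ Finset.range q, x (i + k) = if k = N - i then 1 else 0 := by
      intro k _
      rw [hxcoord]
      congr 1
      simp only [eq_iff_iff]
      omega
    rw [Finset.sum_congr rfl this, Finset.sum_ite_eq' (Finset.range q)]
    rw [if_pos (Finset.mem_range.mpr (by omega))]
  set d := cesaroMean S n x - cesaroMean S (4 ^ (p+1)) x with hd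
  have hdcoord : ∀ i ∈ Finset.Ioc (N - n) N, d i = (n:ℝ)⁻¹ - ((4*n :ℕ):ℝ)⁻¹ := by
    intro i hi
    simp only [Finset.mem_Ioc] at hi
    have h4 : (4:ℕ) ^ (p+1) = 4 * n := by rw [hn, pow_succ]; ring
    rw [hd]
    have : d i = cesaroMean S n x i - cesaroMean S (4^(p+1)) x i := rfl
    rw [lp.coeFn_sub, Pi.sub_apply, hA, hA, h4,
      hsum n i (by omega) hi.1 hi.2, hsum (4*n) i (by omega) (by omega) hi.2]
    ring
  -- lower bound norm
  have hcard : (Finset.Ioc (N - n) N).card = n := by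
    rw [Nat.card_Ioc]; omega
  have hlow : ∑ i ∈ Finset.Ioc (N - n) N, ‖d i‖ ≤ ‖d‖ := by
    have := lp.sum_rpow_le_norm_rpow (p := 1) (by norm_num) d (Finset.Ioc (N - n) N)
    simpa using this
  have hval : ∑ i ∈ Finset.Ioc (N - n) N, ‖d i‖ = (3:ℝ)/4 := by
    rw [Finset.sum_congr rfl (fun i hi => by rw [hdcoord i hi])]
    rw [Finset.sum_const, hcard]
    have hn' : (0:ℝ) < (n:ℝ) := by exact_mod_cast hnpos
    rw [Real.norm_eq_abs, abs_of_nonneg]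
    · push_cast
      field_simp
      ring_nf; rw [mul_inv_cancel₀ hn'.ne', one_mul]
    · push_cast
      rw [sub_nonneg]
      apply inv_anti₀ hn'
      linarith
  calc (1:ℝ)/2 < 3/4 := by norm_num
    _ = ∑ i ∈ Finset.Ioc (N - n) N, ‖d i‖ := hval.symm
    _ ≤ ‖d‖ := hlow
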